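/- Let α, μ > 0, let ω, ρ, τ > 0 be impairment parameters, and let δ > 0. Then ∫₀^∞ exp(−δ·ω·γ/(ρ·γ + τ)) · f_{γ̄}(γ) dγ tends to exp(−δ·ω/ρ) as γ̄ → ∞. Consequently, for an exponential-type SEP H(γ) = Σ_{n=0}^{N} θ_n·exp(−δ_n·γ) with θ_n ≥ 0 and δ_n > 0, the average symbol error probability of the impaired system tends to the error floor Σ_{n=0}^{N} θ_n·exp(−δ_n·ω/ρ) as γ̄ → ∞, a ceiling independent of the fading severity parameters α and μ. -/

import Mathlib

open Real MeasureTheory Filter Topology Finset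

/-- The α-μ SNR probability density function. -/
noncomputable def alphaMuDensity (α μ γbar γ : ℝ) : ℝ :=
  if γ ≤ 0 then 0
  else (α * μ ^ μ) / (2 * Real.Gamma μ * γbar ^ (α * μ / 2)) * γ ^ (α * μ / 2 - 1) *
    Real.exp (-μ * (γ / γbar) ^ (α / 2))

lemma measurable_density (α μ b : ℝ) : Measurable (alphaMuDensity α μ b) := by
  unfold alphaMuDensity
  apply Measurable.ite (measurableSet_le measurable_id measurable_const)
  · exact measurable_const
  · fun_prop

lemma integrableOn_aux {α μ : ℝ} (hα : 0 < α) (hμ : 0 < μ) :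
    IntegrableOn (fun u : ℝ => u ^ (α * μ / 2 - 1) * Real.exp (-μ * u ^ (α / 2)))
      (Set.Ioi 0) := by
  have hp : (0:ℝ) < α / 2 := by linarith
  have h1 : IntegrableOn (fun y : ℝ => Real.exp (-y) * y ^ (μ - 1)) (Set.Ioi 0) :=
    Real.GammaIntegral_convergent hμ
  have h2' : IntegrableOn (fun x : ℝ => Real.exp (-(μ * x)) * (μ * x) ^ (μ - 1))
      (Set.Ioi 0) := by
    have := (integrableOn_Ioi_comp_mul_left_iff
      (fun y : ℝ => Real.exp (-y) * y ^ (μ - 1)) 0 hμ).mpr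
    rw [mul_zero] at this
    exact this h1
  have h2 : IntegrableOn (fun y : ℝ => y ^ (μ - 1) * Real.exp (-μ * y)) (Set.Ioi 0) := by
    have h2'' : IntegrableOn
        (fun x : ℝ => μ ^ (1 - μ) * (Real.exp (-(μ * x)) * (μ * x) ^ (μ - 1)))
        (Set.Ioi 0) := h2'.const_mul (μ ^ (1 - μ))
    refine h2''.congr_fun (fun x hx => ?_) measurableSet_Ioi
    have hx0 : (0:ℝ) < x := hx
    have e : μ ^ (1 - μ) * μ ^ (μ - 1) = 1 := by
      rw [← Real.rpow_add hμ]; norm_num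
    beta_reduce
    rw [Real.mul_rpow hμ.le hx0.le, neg_mul μ x,
      show μ ^ (1 - μ) * (Real.exp (-(μ * x)) * (μ ^ (μ - 1) * x ^ (μ - 1)))
          = μ ^ (1 - μ) * μ ^ (μ - 1) * (x ^ (μ - 1) * Real.exp (-(μ * x))) from by ring,
      e, one_mul]
  have h3 := (integrableOn_Ioi_comp_rpow_iff'
    (fun y : ℝ => y ^ (μ - 1) * Real.exp (-μ * y)) hp.ne').mpr h2
  refine h3.congr_fun (fun x hx => ?_) measurableSet_Ioi
  have hx0 : (0:ℝ) < x := hx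
  simp only [smul_eq_mul]
  rw [← mul_assoc, ← Real.rpow_mul hx0.le, ← Real.rpow_add hx0]
  have : α / 2 - 1 + α / 2 * (μ - 1) = α * μ / 2 - 1 := by ring
  rw [this]

lemma integral_density_one {α μ : ℝ} (hα : 0 < α) (hμ : 0 < μ) :
    ∫ u in Set.Ioi (0:ℝ), alphaMuDensity α μ 1 u = 1 := by
  have hq : (-1:ℝ) < α * μ / 2 - 1 := by nlinarith
  have hp : (0:ℝ) < α / 2 := by linarith
  have hG : 0 < Real.Gamma μ := Real.Gamma_pos_of_pos hμ
  have key : ∫ u in Set.Ioi (0:ℝ), u ^ (α*μ/2 - 1) * Real.exp (-μ * u ^ (α/2))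
      = μ ^ (-μ) * (2/α) * Real.Gamma μ := by
    rw [integral_rpow_mul_exp_neg_mul_rpow hp hq hμ]
    have e1 : -(α*μ/2 - 1 + 1)/(α/2) = -μ := by field_simp; ring
    have e2 : (α*μ/2 - 1 + 1)/(α/2) = μ := by field_simp; ring
    have e3 : (1:ℝ)/(α/2) = 2/α := by rw [one_div_div]
    rw [e1, e2, e3]
  have step : ∫ u in Set.Ioi (0:ℝ), alphaMuDensity α μ 1 u
      = (α * μ ^ μ / (2 * Real.Gamma μ)) *
        ∫ u in Set.Ioi (0:ℝ), u ^ (α*μ/2 - 1) * Real.exp (-μ * u ^ (α/2)) := by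
    rw [← integral_const_mul]
    refine setIntegral_congr_fun measurableSet_Ioi (fun u hu => ?_)
    have hu0 : (0:ℝ) < u := hu
    rw [alphaMuDensity, if_neg (not_le.mpr hu0), Real.one_rpow, div_one, mul_one]
    ring
  rw [step, key]
  have hμμ : μ ^ μ * μ ^ (-μ) = 1 := by
    rw [← Real.rpow_add hμ]; simp
  field_simp
  linear_combination hμμ

lemma density_nonneg {α μ : ℝ} (hα : 0 < α) (hμ : 0 < μ) (u : ℝ) :
    0 ≤ alphaMuDensity α μ 1 u := by
  unfold alphaMuDensity
  split_ifs with h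
  · exact le_refl 0
  · have hu : 0 < u := lt_of_not_ge h
    have hG : 0 < Real.Gamma μ := Real.Gamma_pos_of_pos hμ
    positivity

lemma integrableOn_density {α μ : ℝ} (hα : 0 < α) (hμ : 0 < μ) :
    IntegrableOn (alphaMuDensity α μ 1) (Set.Ioi 0) := by
  have h : IntegrableOn
      (fun u : ℝ => (α * μ ^ μ / (2 * Real.Gamma μ)) *
        (u ^ (α * μ / 2 - 1) * Real.exp (-μ * u ^ (α / 2)))) (Set.Ioi 0) :=
    (integrableOn_aux hα hμ).const_mul _
  refine h.congr_fun (fun u hu => ?_) measurableSet_Ioi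
  have hu0 : (0:ℝ) < u := hu
  rw [alphaMuDensity, if_neg (not_le.mpr hu0), Real.one_rpow, div_one, mul_one]
  ring

lemma changevar {α μ : ℝ} (hμ : 0 < μ) (h : ℝ → ℝ) {b : ℝ} (hb : 0 < b) :
    ∫ γ in Set.Ioi (0:ℝ), h γ * alphaMuDensity α μ b γ
      = ∫ u in Set.Ioi (0:ℝ), h (b * u) * alphaMuDensity α μ 1 u := by
  have key := integral_comp_mul_left_Ioi
    (fun γ : ℝ => h γ * alphaMuDensity α μ b γ) 0 hb
  rw [mul_zero] at key
  have key2 : ∫ γ in Set.Ioi (0:ℝ), h γ * alphaMuDensity α μ b γ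
      = b • ∫ x in Set.Ioi (0:ℝ), h (b * x) * alphaMuDensity α μ b (b * x) := by
    rw [key, smul_smul, mul_inv_cancel₀ hb.ne', one_smul]
  rw [key2, ← integral_smul]
  refine setIntegral_congr_fun measurableSet_Ioi (fun u hu => ?_)
  have hu0 : (0:ℝ) < u := hu
  have hbu : (0:ℝ) < b * u := by positivity
  have hA : (0:ℝ) < b ^ (α * μ / 2) := Real.rpow_pos_of_pos hb _
  rw [smul_eq_mul, alphaMuDensity, if_neg (not_le.mpr hbu), alphaMuDensity,
    if_neg (not_le.mpr hu0), Real.one_rpow, div_one,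
    mul_div_cancel_left₀ u hb.ne', Real.mul_rpow hb.le hu0.le,
    Real.rpow_sub hb, Real.rpow_one]
  set A := b ^ (α * μ / 2) with hAdef
  have hG : (0:ℝ) < Real.Gamma μ := Real.Gamma_pos_of_pos hμ
  field_simp [hb.ne', hA.ne', hG.ne']

lemma tendstoB {α μ ω ρ τ : ℝ} (hα : 0 < α) (hμ : 0 < μ)
    (hω : 0 < ω) (hρ : 0 < ρ) (hτ : 0 < τ) {δ : ℝ} (hδ : 0 < δ) :
    Tendsto (fun b : ℝ => ∫ u in Set.Ioi (0:ℝ),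
        Real.exp (-δ * (ω * (b * u) / (ρ * (b * u) + τ))) * alphaMuDensity α μ 1 u) atTop
      (𝓝 (Real.exp (-δ * ω / ρ))) := by
  have hInt := integrableOn_density hα hμ
  have hmeas := measurable_density α μ 1
  have hlim : ∫ u in Set.Ioi (0:ℝ), Real.exp (-δ * ω / ρ) * alphaMuDensity α μ 1 u
      = Real.exp (-δ * ω / ρ) := by
    rw [integral_const_mul, integral_density_one hα hμ, mul_one]
  rw [← hlim]
  apply tendsto_integral_filter_of_dominated_convergence (alphaMuDensity α μ 1)
  · refine Filter.Eventually.of_forall (fun b => ?_)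
    have : Measurable (fun u : ℝ =>
        Real.exp (-δ * (ω * (b * u) / (ρ * (b * u) + τ))) * alphaMuDensity α μ 1 u) := by
      fun_prop
    exact this.aestronglyMeasurable
  · filter_upwards [eventually_gt_atTop (0:ℝ)] with b hb
    refine (ae_restrict_iff' measurableSet_Ioi).2 (Filter.Eventually.of_forall fun u hu => ?_)
    have hu0 : (0:ℝ) < u := hu
    have hd := density_nonneg hα hμ u
    have hexp : Real.exp (-δ * (ω * (b * u) / (ρ * (b * u) + τ))) ≤ 1 := by
      rw [Real.exp_le_one_iff]
      have hfrac : 0 ≤ ω * (b * u) / (ρ * (b * u) + τ) := by positivity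
      nlinarith
    rw [Real.norm_eq_abs, abs_mul, abs_of_nonneg (Real.exp_pos _).le, abs_of_nonneg hd]
    calc Real.exp (-δ * (ω * (b * u) / (ρ * (b * u) + τ))) * alphaMuDensity α μ 1 u
        ≤ 1 * alphaMuDensity α μ 1 u := by
          exact mul_le_mul_of_nonneg_right hexp hd
      _ = alphaMuDensity α μ 1 u := one_mul _
  · exact hInt
  · refine (ae_restrict_iff' measurableSet_Ioi).2 (Filter.Eventually.of_forall fun u hu => ?_)
    have hu0 : (0:ℝ) < u := hu
    have hρu : (0:ℝ) < ρ * u := by positivity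
    have h1 : Tendsto (fun b : ℝ => τ / b) atTop (𝓝 0) :=
      tendsto_const_nhds.div_atTop tendsto_id
    have h2 : Tendsto (fun b : ℝ => ρ * u + τ / b) atTop (𝓝 (ρ * u)) := by
      simpa using tendsto_const_nhds.add h1
    have h3 : Tendsto (fun b : ℝ => (ω * u) / (ρ * u + τ / b)) atTop
        (𝓝 ((ω * u) / (ρ * u))) :=
      tendsto_const_nhds.div h2 hρu.ne'
    have h4 : Tendsto (fun b : ℝ => ω * (b * u) / (ρ * (b * u) + τ)) atTop
        (𝓝 (ω / ρ)) := by
      rw [show ω / ρ = (ω * u) / (ρ * u) from (mul_div_mul_right ω ρ hu0.ne').symm]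
      refine h3.congr' ?_
      filter_upwards [eventually_gt_atTop (0:ℝ)] with b hb
      have hden : (0:ℝ) < ρ * (b * u) + τ := by positivity
      field_simp
    have h5 : Tendsto (fun b : ℝ => Real.exp (-δ * (ω * (b * u) / (ρ * (b * u) + τ))))
        atTop (𝓝 (Real.exp (-δ * ω / ρ))) := by
      rw [show -δ * ω / ρ = -δ * (ω / ρ) by ring]
      exact (Real.continuous_exp.tendsto _).comp (h4.const_mul (-δ))
    exact h5.mul_const _

lemma integrable_exp_mul_density {α μ ω ρ τ : ℝ} (hα : 0 < α) (hμ : 0 < μ)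
    (hω : 0 < ω) (hρ : 0 < ρ) (hτ : 0 < τ) {δ b : ℝ} (hδ : 0 < δ) (hb : 0 < b) :
    IntegrableOn (fun u : ℝ =>
      Real.exp (-δ * (ω * (b * u) / (ρ * (b * u) + τ))) * alphaMuDensity α μ 1 u)
      (Set.Ioi 0) := by
  have hmeas := measurable_density α μ 1
  refine (integrableOn_density hα hμ).mono' ?_ ?_
  · have : Measurable (fun u : ℝ =>
        Real.exp (-δ * (ω * (b * u) / (ρ * (b * u) + τ))) * alphaMuDensity α μ 1 u) := by
      fun_prop
    exact this.aestronglyMeasurable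
  · refine (ae_restrict_iff' measurableSet_Ioi).2 (Filter.Eventually.of_forall fun u hu => ?_)
    have hu0 : (0:ℝ) < u := hu
    have hd := density_nonneg hα hμ u
    have hexp : Real.exp (-δ * (ω * (b * u) / (ρ * (b * u) + τ))) ≤ 1 := by
      rw [Real.exp_le_one_iff]
      have hfrac : 0 ≤ ω * (b * u) / (ρ * (b * u) + τ) := by positivity
      nlinarith
    rw [Real.norm_eq_abs, abs_mul, abs_of_nonneg (Real.exp_pos _).le, abs_of_nonneg hd]
    nlinarith [mul_le_mul_of_nonneg_right hexp hd]

theorem stmt_18 (α μ : ℝ) (hα : 0 < α) (hμ : 0 < μ)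
    (ω ρ τ : ℝ) (hω : 0 < ω) (hρ : 0 < ρ) (hτ : 0 < τ) (δ : ℝ) (hδ : 0 < δ) :
    Tendsto (fun γbar : ℝ =>
        ∫ γ in Set.Ioi (0 : ℝ),
          Real.exp (-δ * (ω * γ / (ρ * γ + τ))) * alphaMuDensity α μ γbar γ) atTop
      (𝓝 (Real.exp (-δ * ω / ρ))) ∧
    ∀ (N : ℕ) (θ δs : ℕ → ℝ), (∀ n, 0 ≤ θ n) → (∀ n, 0 < δs n) →
      Tendsto (fun γbar : ℝ =>
          ∫ γ in Set.Ioi (0 : ℝ),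
            (∑ n ∈ Finset.range (N + 1), θ n * Real.exp (-(δs n) * (ω * γ / (ρ * γ + τ)))) *
              alphaMuDensity α μ γbar γ) atTop
        (𝓝 (∑ n ∈ Finset.range (N + 1), θ n * Real.exp (-(δs n) * ω / ρ))) := by
  constructor
  · refine (tendstoB hα hμ hω hρ hτ hδ).congr' ?_
    filter_upwards [eventually_gt_atTop (0:ℝ)] with b hb
    exact (changevar hμ (fun γ => Real.exp (-δ * (ω * γ / (ρ * γ + τ)))) hb).symm
  · intro N θ δs hθ hδs
    have hsum : Tendsto (fun b : ℝ => ∑ n ∈ Finset.range (N + 1),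
        θ n * ∫ u in Set.Ioi (0:ℝ),
          Real.exp (-(δs n) * (ω * (b * u) / (ρ * (b * u) + τ))) * alphaMuDensity α μ 1 u)
        atTop (𝓝 (∑ n ∈ Finset.range (N + 1), θ n * Real.exp (-(δs n) * ω / ρ))) := by
      refine tendsto_finset_sum _ (fun n _ => ?_)
      exact (tendstoB hα hμ hω hρ hτ (hδs n)).const_mul (θ n)
    refine hsum.congr' ?_
    filter_upwards [eventually_gt_atTop (0:ℝ)] with b hb
    rw [changevar hμ
      (fun γ => ∑ n ∈ Finset.range (N + 1), θ n * Real.exp (-(δs n) * (ω * γ / (ρ * γ + τ))))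
      hb]
    rw [show (fun u : ℝ =>
        (∑ n ∈ Finset.range (N + 1),
          θ n * Real.exp (-(δs n) * (ω * (b * u) / (ρ * (b * u) + τ)))) *
          alphaMuDensity α μ 1 u)
      = (fun u : ℝ => ∑ n ∈ Finset.range (N + 1),
          θ n * (Real.exp (-(δs n) * (ω * (b * u) / (ρ * (b * u) + τ))) *
            alphaMuDensity α μ 1 u)) from by
        funext u; rw [Finset.sum_mul]; exact Finset.sum_congr rfl (fun n _ => by ring)]
    rw [integral_finset_sum _ (fun n _ => ((integrable_exp_mul_density hα hμ hω hρ hτ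
      (hδs n) hb).const_mul (θ n)))]
    exact Finset.sum_congr rfl (fun n _ => by rw [integral_const_mul])
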